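/- If ω is trivial, i.e. h·(l·1_A) = ω(h,l) = Σ(h₍₁₎·1_A)(h₍₂₎l·1_A), then in A #_{(α,ω)} H one has (a # h)(b # l) = Σ a(h₍₁₎·(b(l₍₁₎·1_A))) # h₍₂₎l₍₂₎, recovering the partial smash product. -/

import Mathlib

open TensorProduct

noncomputable section

/-- A twisted partial action `(α, ω)` of a Hopf algebra `H` on a unital
algebra `A` (Definition 2.1 of Alves–Batista–Dokuchaev–Paques).  Sweedler sums
are expressed by quantifying over arbitrary finite representations of the
comultiplication. -/
structure TwistedPartialAction (k H A : Type) [CommRing k]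
    [Ring H] [HopfAlgebra k H] [Ring A] [Algebra k A] where
  act : H →ₗ[k] A →ₗ[k] A
  cocycle : H →ₗ[k] H →ₗ[k] A
  /-- `1_H · a = a` -/
  act_one : ∀ a : A, act 1 a = a
  /-- `h · (ab) = Σ (h₁ · a)(h₂ · b)` -/
  act_mul : ∀ (h : H) (a b : A) (ι : Type) (s : Finset ι) (h1 h2 : ι → H),
    Coalgebra.comul (R := k) h = ∑ i ∈ s, h1 i ⊗ₜ[k] h2 i →
    act h (a * b) = ∑ i ∈ s, act (h1 i) a * act (h2 i) b
  /-- `Σ (h₁ · (l₁ · a)) ω(h₂, l₂) = Σ ω(h₁, l₁)(h₂ l₂ · a)` -/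
  twisted : ∀ (h l : H) (a : A) (ι κ : Type) (s : Finset ι) (t : Finset κ)
    (h1 h2 : ι → H) (l1 l2 : κ → H),
    Coalgebra.comul (R := k) h = ∑ i ∈ s, h1 i ⊗ₜ[k] h2 i →
    Coalgebra.comul (R := k) l = ∑ j ∈ t, l1 j ⊗ₜ[k] l2 j →
    ∑ i ∈ s, ∑ j ∈ t, act (h1 i) (act (l1 j) a) * cocycle (h2 i) (l2 j) =
      ∑ i ∈ s, ∑ j ∈ t, cocycle (h1 i) (l1 j) * act (h2 i * l2 j) a
  /-- `ω(h,l) = Σ ω(h₁, l₁)(h₂ l₂ · 1)` -/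
  cocycle_absorb : ∀ (h l : H) (ι κ : Type) (s : Finset ι) (t : Finset κ)
    (h1 h2 : ι → H) (l1 l2 : κ → H),
    Coalgebra.comul (R := k) h = ∑ i ∈ s, h1 i ⊗ₜ[k] h2 i →
    Coalgebra.comul (R := k) l = ∑ j ∈ t, l1 j ⊗ₜ[k] l2 j →
    cocycle h l = ∑ i ∈ s, ∑ j ∈ t, cocycle (h1 i) (l1 j) * act (h2 i * l2 j) 1

/-- The element `a # h = Σ a(h₁ · 1_A) ⊗ h₂` of `A ⊗ H`. -/
def sharp {k H A : Type} [CommRing k] [Ring H] [HopfAlgebra k H]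
    [Ring A] [Algebra k A] (act : H →ₗ[k] A →ₗ[k] A) (a : A) (h : H) :
    A ⊗[k] H :=
  (TensorProduct.map ((LinearMap.mulLeft k a) ∘ₗ (LinearMap.flip act) 1)
    LinearMap.id) (Coalgebra.comul (R := k) h)

/-- The partial crossed product `A #_{(α,ω)} H`, as a submodule of `A ⊗ H`:
the span of the elements `a # h`. -/
def crossedSpan {k H A : Type} [CommRing k] [Ring H] [HopfAlgebra k H]
    [Ring A] [Algebra k A] (act : H →ₗ[k] A →ₗ[k] A) :
    Submodule k (A ⊗[k] H) :=
  Submodule.span k {x : A ⊗[k] H | ∃ a h, sharp act a h = x}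

/-- `μ` is the multiplication `(a ⊗ h)(b ⊗ l) = Σ a(h₁·b)ω(h₂,l₁) ⊗ h₃l₂`
on `A ⊗ H`. -/
def IsCrossedMul {k H A : Type} [CommRing k] [Ring H] [HopfAlgebra k H]
    [Ring A] [Algebra k A] (act : H →ₗ[k] A →ₗ[k] A)
    (cocycle : H →ₗ[k] H →ₗ[k] A)
    (μ : A ⊗[k] H →ₗ[k] A ⊗[k] H →ₗ[k] A ⊗[k] H) : Prop :=
  ∀ (a b : A) (h l : H) (ι ι' κ : Type) (s : Finset ι) (s' : ι → Finset ι')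
    (t : Finset κ) (h1 h2 : ι → H) (h21 h22 : ι → ι' → H) (l1 l2 : κ → H),
    Coalgebra.comul (R := k) h = ∑ i ∈ s, h1 i ⊗ₜ[k] h2 i →
    (∀ i ∈ s, Coalgebra.comul (R := k) (h2 i) =
      ∑ j ∈ s' i, h21 i j ⊗ₜ[k] h22 i j) →
    Coalgebra.comul (R := k) l = ∑ p ∈ t, l1 p ⊗ₜ[k] l2 p →
    μ (a ⊗ₜ[k] h) (b ⊗ₜ[k] l) =
      ∑ i ∈ s, ∑ j ∈ s' i, ∑ p ∈ t,
        (a * act (h1 i) b * cocycle (h21 i j) (l1 p)) ⊗ₜ[k] (h22 i j * l2 p)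

section Aux

variable {k H A : Type} [CommRing k] [Ring H] [HopfAlgebra k H]
  [Ring A] [Algebra k A]

lemma sharp_eq' (act : H →ₗ[k] A →ₗ[k] A) (c : A) (x : H) {ι : Type}
    (s : Finset ι) (f1 f2 : ι → H)
    (hx : Coalgebra.comul (R := k) x = ∑ i ∈ s, f1 i ⊗ₜ[k] f2 i) :
    sharp act c x = ∑ i ∈ s, (c * act (f1 i) 1) ⊗ₜ[k] f2 i := by
  rw [sharp, hx, map_sum]
  simp

/-- The trilinear map `x y z ↦ (C * g₁ x * g₂ y) ⊗ (z * D)`. -/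
def tri (C : A) (D : H) (g₁ g₂ : H →ₗ[k] A) :
    H →ₗ[k] H →ₗ[k] H →ₗ[k] A ⊗[k] H :=
  (((LinearMap.mul k A) ∘ₗ (LinearMap.mulLeft k C) ∘ₗ g₁).compl₂ g₂).compr₂
    ((LinearMap.lcomp k (A ⊗[k] H) (LinearMap.mulRight k D)) ∘ₗ
      (TensorProduct.mk k A H))

lemma tri_apply (C : A) (D : H) (g₁ g₂ : H →ₗ[k] A) (x y z : H) :
    tri C D g₁ g₂ x y z = (C * g₁ x * g₂ y) ⊗ₜ[k] (z * D) := rfl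

/-- The trilinear map `x y z ↦ (C * g₁ x * g₂ y * g₃ z) ⊗ D`. -/
def tri2 (C : A) (D : H) (g₁ g₂ g₃ : H →ₗ[k] A) :
    H →ₗ[k] H →ₗ[k] H →ₗ[k] A ⊗[k] H :=
  (((LinearMap.mul k A) ∘ₗ (LinearMap.mulLeft k C) ∘ₗ g₁).compl₂ g₂).compr₂
    (((LinearMap.mul k A).compl₂ g₃).compr₂ ((TensorProduct.mk k A H).flip D))

lemma tri2_apply (C : A) (D : H) (g₁ g₂ g₃ : H →ₗ[k] A) (x y z : H) :
    tri2 C D g₁ g₂ g₃ x y z = (C * g₁ x * g₂ y * g₃ z) ⊗ₜ[k] D := rfl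

/-- Coassociativity, in Sweedler-sum form: expanding the first leg of a
representation of `comul x` gives the same triple sum as expanding the
second leg. -/
lemma coassoc_sum (rep : H → Finset (H × H))
    (hrep : ∀ x : H, Coalgebra.comul (R := k) x = ∑ w ∈ rep x, w.1 ⊗ₜ[k] w.2)
    {M : Type} [AddCommGroup M] [Module k M]
    (f : H →ₗ[k] H →ₗ[k] H →ₗ[k] M) (x : H) {ι : Type} (s : Finset ι)
    (p q : ι → H) (hx : Coalgebra.comul (R := k) x = ∑ i ∈ s, p i ⊗ₜ[k] q i) :
    ∑ i ∈ s, ∑ w ∈ rep (p i), f w.1 w.2 (q i)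
      = ∑ i ∈ s, ∑ w ∈ rep (q i), f (p i) w.1 w.2 := by
  set T₁ : (H ⊗[k] H) ⊗[k] H →ₗ[k] M :=
    TensorProduct.lift (TensorProduct.lift f) with hT₁
  set T₂ : H ⊗[k] (H ⊗[k] H) →ₗ[k] M :=
    TensorProduct.lift ((TensorProduct.lift.equiv (RingHom.id k) H H M).toLinearMap ∘ₗ f)
      with hT₂
  have hT : ∀ z, T₂ ((TensorProduct.assoc k H H H) z) = T₁ z := by
    intro z
    have : T₂ ∘ₗ (TensorProduct.assoc k H H H).toLinearMap = T₁ := by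
      ext a b c
      simp [hT₁, hT₂]
    exact LinearMap.congr_fun this z
  have e1 : ∑ i ∈ s, ∑ w ∈ rep (p i), f w.1 w.2 (q i)
      = T₁ ((Coalgebra.comul (R := k)).rTensor H (Coalgebra.comul x)) := by
    rw [hx, map_sum, map_sum]
    refine Finset.sum_congr rfl fun i _ => ?_
    rw [LinearMap.rTensor_tmul, hrep (p i), TensorProduct.sum_tmul, map_sum]
    simp [hT₁]
  have e2 : ∑ i ∈ s, ∑ w ∈ rep (q i), f (p i) w.1 w.2
      = T₂ ((Coalgebra.comul (R := k)).lTensor H (Coalgebra.comul x)) := by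
    rw [hx, map_sum, map_sum]
    refine Finset.sum_congr rfl fun i _ => ?_
    rw [LinearMap.lTensor_tmul, hrep (q i), TensorProduct.tmul_sum, map_sum]
    simp [hT₂]
  rw [e1, e2, ← Coalgebra.coassoc_apply x, hT]

/-- `act_mul` specialized to a chosen representation of the
comultiplication. -/
lemma act_combine (P : TwistedPartialAction k H A)
    (rep : H → Finset (H × H))
    (hrep : ∀ x : H, Coalgebra.comul (R := k) x = ∑ w ∈ rep x, w.1 ⊗ₜ[k] w.2)
    (x : H) (a b : A) :
    ∑ w ∈ rep x, P.act w.1 a * P.act w.2 b = P.act x (a * b) :=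
  (P.act_mul x a b (H × H) (rep x) Prod.fst Prod.snd (hrep x)).symm

/-- The heart of the computation: for a fixed right-hand tensor factor
`c ⊗ₜ y`, summing over a representation of `comul x`. -/
lemma smash_key {k H A : Type} [CommRing k] [Ring H] [HopfAlgebra k H]
    [Ring A] [Algebra k A] (P : TwistedPartialAction k H A)
    (htriv1 : ∀ h l : H, P.act h (P.act l 1) = P.cocycle h l)
    (htriv2 : ∀ (h l : H) (ι : Type) (s : Finset ι) (h1 h2 : ι → H),
      Coalgebra.comul (R := k) h = ∑ i ∈ s, h1 i ⊗ₜ[k] h2 i →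
      P.cocycle h l = ∑ i ∈ s, P.act (h1 i) 1 * P.act (h2 i * l) 1)
    (μ : A ⊗[k] H →ₗ[k] A ⊗[k] H →ₗ[k] A ⊗[k] H)
    (hμ : IsCrossedMul P.act P.cocycle μ)
    (rep : H → Finset (H × H))
    (hrep : ∀ x : H, Coalgebra.comul (R := k) x = ∑ w ∈ rep x, w.1 ⊗ₜ[k] w.2)
    (a c : A) (y x : H) {ι : Type} (s : Finset ι) (p q : ι → H)
    (hx : Coalgebra.comul (R := k) x = ∑ i ∈ s, p i ⊗ₜ[k] q i) :
    ∑ i ∈ s, μ ((a * P.act (p i) 1) ⊗ₜ[k] q i) (c ⊗ₜ[k] y)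
      = ∑ i ∈ s, sharp P.act (a * P.act (p i) c) (q i * y) := by
  have step1 : ∀ i ∈ s,
      μ ((a * P.act (p i) 1) ⊗ₜ[k] q i) (c ⊗ₜ[k] y)
        = ∑ m ∈ rep (q i), ∑ n ∈ rep m.2, ∑ u ∈ rep y,
            ((a * P.act (p i) 1) * P.act m.1 c * P.cocycle n.1 u.1)
              ⊗ₜ[k] (n.2 * u.2) :=
    fun i _ => hμ (a * P.act (p i) 1) c (q i) y (H × H) (H × H) (H × H)
      (rep (q i)) (fun m => rep m.2) (rep y) Prod.fst Prod.snd
      (fun _ n => n.1) (fun _ n => n.2) Prod.fst Prod.snd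
      (hrep (q i)) (fun m _ => hrep m.2) (hrep y)
  have core : ∀ u : H × H,
      ∑ i ∈ s, ∑ m ∈ rep (q i), ∑ n ∈ rep m.2,
          ((a * P.act (p i) 1) * P.act m.1 c * P.act n.1 (P.act u.1 1))
            ⊗ₜ[k] (n.2 * u.2)
        = ∑ i ∈ s, ∑ n ∈ rep (q i),
            (a * P.act (p i) c * P.act (n.1 * u.1) 1) ⊗ₜ[k] (n.2 * u.2) := by
    intro u
    calc
      ∑ i ∈ s, ∑ m ∈ rep (q i), ∑ n ∈ rep m.2,
          ((a * P.act (p i) 1) * P.act m.1 c * P.act n.1 (P.act u.1 1))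
            ⊗ₜ[k] (n.2 * u.2)
        = ∑ i ∈ s, ∑ m ∈ rep (q i), ∑ n ∈ rep m.1,
            ((a * P.act (p i) 1) * P.act n.1 c * P.act n.2 (P.act u.1 1))
              ⊗ₜ[k] (m.2 * u.2) := by
          refine Finset.sum_congr rfl fun i _ => ?_
          have := coassoc_sum rep hrep
            (tri (a * P.act (p i) 1) u.2 (P.act.flip c)
              (P.act.flip (P.act u.1 1)))
            (q i) (rep (q i)) Prod.fst Prod.snd (hrep (q i))
          simpa only [tri_apply, LinearMap.flip_apply] using this.symm
      _ = ∑ i ∈ s, ∑ m ∈ rep (q i),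
            ((a * P.act (p i) 1) * P.act m.1 (c * P.act u.1 1))
              ⊗ₜ[k] (m.2 * u.2) := by
          refine Finset.sum_congr rfl fun i _ => Finset.sum_congr rfl
            fun m _ => ?_
          rw [← act_combine P rep hrep m.1 c (P.act u.1 1), Finset.mul_sum,
            TensorProduct.sum_tmul]
          exact Finset.sum_congr rfl fun n _ => by rw [mul_assoc]
      _ = ∑ i ∈ s, ∑ m ∈ rep (p i),
            (a * P.act m.1 1 * P.act m.2 (c * P.act u.1 1))
              ⊗ₜ[k] (q i * u.2) := by
          have := coassoc_sum rep hrep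
            (tri a u.2 (P.act.flip 1) (P.act.flip (c * P.act u.1 1)))
            x s p q hx
          simpa only [tri_apply, LinearMap.flip_apply] using this.symm
      _ = ∑ i ∈ s,
            (a * P.act (p i) (c * P.act u.1 1)) ⊗ₜ[k] (q i * u.2) := by
          refine Finset.sum_congr rfl fun i _ => ?_
          have h7 := act_combine P rep hrep (p i) 1 (c * P.act u.1 1)
          rw [one_mul] at h7
          rw [← h7, Finset.mul_sum, TensorProduct.sum_tmul]
          exact Finset.sum_congr rfl fun m _ => by rw [mul_assoc]
      _ = ∑ i ∈ s, ∑ n ∈ rep (p i), ∑ w ∈ rep n.2,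
            (a * P.act n.1 c * P.act w.1 1 * P.act (w.2 * u.1) 1)
              ⊗ₜ[k] (q i * u.2) := by
          refine Finset.sum_congr rfl fun i _ => ?_
          have h8 := (act_combine P rep hrep (p i) c (P.act u.1 1)).symm
          have h9 : ∀ n : H × H, P.act n.2 (P.act u.1 1)
              = ∑ w ∈ rep n.2, P.act w.1 1 * P.act (w.2 * u.1) 1 := fun n => by
            rw [htriv1 n.2 u.1]
            exact htriv2 n.2 u.1 (H × H) (rep n.2) Prod.fst Prod.snd (hrep n.2)
          rw [h8, Finset.mul_sum, TensorProduct.sum_tmul]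
          refine Finset.sum_congr rfl fun n _ => ?_
          rw [h9 n, Finset.mul_sum, Finset.mul_sum, TensorProduct.sum_tmul]
          exact Finset.sum_congr rfl fun w _ => by
            simp only [mul_assoc]
      _ = ∑ i ∈ s, ∑ n ∈ rep (p i), ∑ w ∈ rep n.1,
            (a * P.act w.1 c * P.act w.2 1 * P.act (n.2 * u.1) 1)
              ⊗ₜ[k] (q i * u.2) := by
          refine Finset.sum_congr rfl fun i _ => ?_
          have := coassoc_sum rep hrep
            (tri2 a (q i * u.2) (P.act.flip c) (P.act.flip 1)
              ((P.act.flip 1) ∘ₗ (LinearMap.mulRight k u.1)))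
            (p i) (rep (p i)) Prod.fst Prod.snd (hrep (p i))
          simpa only [tri2_apply, LinearMap.flip_apply, LinearMap.coe_comp,
            Function.comp_apply, LinearMap.mulRight_apply] using this.symm
      _ = ∑ i ∈ s, ∑ n ∈ rep (p i),
            (a * P.act n.1 c * P.act (n.2 * u.1) 1) ⊗ₜ[k] (q i * u.2) := by
          refine Finset.sum_congr rfl fun i _ => Finset.sum_congr rfl
            fun n _ => ?_
          have h11 := act_combine P rep hrep n.1 c 1
          rw [mul_one] at h11
          rw [← h11, Finset.mul_sum, Finset.sum_mul, TensorProduct.sum_tmul]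
          exact Finset.sum_congr rfl fun w _ => by
            simp only [mul_assoc]
      _ = ∑ i ∈ s, ∑ n ∈ rep (q i),
            (a * P.act (p i) c * P.act (n.1 * u.1) 1) ⊗ₜ[k] (n.2 * u.2) := by
          have := coassoc_sum rep hrep
            (tri a u.2 (P.act.flip c)
              ((P.act.flip 1) ∘ₗ (LinearMap.mulRight k u.1)))
            x s p q hx
          simpa only [tri_apply, LinearMap.flip_apply, LinearMap.coe_comp,
            Function.comp_apply, LinearMap.mulRight_apply] using this
  have hsharp : ∀ i : ι, sharp P.act (a * P.act (p i) c) (q i * y)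
      = ∑ n ∈ rep (q i), ∑ u ∈ rep y,
          (a * P.act (p i) c * P.act (n.1 * u.1) 1) ⊗ₜ[k] (n.2 * u.2) := by
    intro i
    have hc : Coalgebra.comul (R := k) (q i * y)
        = ∑ m ∈ rep (q i) ×ˢ rep y,
            (m.1.1 * m.2.1) ⊗ₜ[k] (m.1.2 * m.2.2) := by
      rw [Bialgebra.comul_mul, hrep (q i), hrep y, Finset.sum_mul_sum,
        Finset.sum_product]
      simp only [Algebra.TensorProduct.tmul_mul_tmul]
    rw [sharp_eq' P.act (a * P.act (p i) c) (q i * y) (rep (q i) ×ˢ rep y)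
      (fun m => m.1.1 * m.2.1) (fun m => m.1.2 * m.2.2) hc,
      Finset.sum_product]
  calc
    ∑ i ∈ s, μ ((a * P.act (p i) 1) ⊗ₜ[k] q i) (c ⊗ₜ[k] y)
      = ∑ i ∈ s, ∑ m ∈ rep (q i), ∑ n ∈ rep m.2, ∑ u ∈ rep y,
          ((a * P.act (p i) 1) * P.act m.1 c
            * P.act n.1 (P.act u.1 1)) ⊗ₜ[k] (n.2 * u.2) := by
        refine Finset.sum_congr rfl fun i hi => ?_
        rw [step1 i hi]
        simp only [htriv1]
    _ = ∑ u ∈ rep y, ∑ i ∈ s, ∑ m ∈ rep (q i), ∑ n ∈ rep m.2,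
          ((a * P.act (p i) 1) * P.act m.1 c
            * P.act n.1 (P.act u.1 1)) ⊗ₜ[k] (n.2 * u.2) :=
        (Finset.sum_congr rfl fun i _ =>
          (Finset.sum_congr rfl fun m _ => Finset.sum_comm).trans
            Finset.sum_comm).trans Finset.sum_comm
    _ = ∑ u ∈ rep y, ∑ i ∈ s, ∑ n ∈ rep (q i),
          (a * P.act (p i) c * P.act (n.1 * u.1) 1) ⊗ₜ[k] (n.2 * u.2) :=
        Finset.sum_congr rfl fun u _ => core u
    _ = ∑ i ∈ s, ∑ n ∈ rep (q i), ∑ u ∈ rep y,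
          (a * P.act (p i) c * P.act (n.1 * u.1) 1) ⊗ₜ[k] (n.2 * u.2) :=
        Finset.sum_comm.trans
          (Finset.sum_congr rfl fun i _ => Finset.sum_comm)
    _ = ∑ i ∈ s, sharp P.act (a * P.act (p i) c) (q i * y) :=
        Finset.sum_congr rfl fun i _ => (hsharp i).symm

end Aux

/-- When the cocycle `ω` is trivial, the multiplication of the partial
crossed product reduces to the partial smash product of Caenepeel–Janssen:
`(a # h)(b # l) = Σ a(h₁·(b(l₁·1))) # h₂l₂`. -/
theorem trivialCocycle_smash
    {k H A : Type} [CommRing k] [Ring H] [HopfAlgebra k H]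
    [Ring A] [Algebra k A] (P : TwistedPartialAction k H A)
    (htriv1 : ∀ h l : H, P.act h (P.act l 1) = P.cocycle h l)
    (htriv2 : ∀ (h l : H) (ι : Type) (s : Finset ι) (h1 h2 : ι → H),
      Coalgebra.comul (R := k) h = ∑ i ∈ s, h1 i ⊗ₜ[k] h2 i →
      P.cocycle h l = ∑ i ∈ s, P.act (h1 i) 1 * P.act (h2 i * l) 1)
    (μ : A ⊗[k] H →ₗ[k] A ⊗[k] H →ₗ[k] A ⊗[k] H)
    (hμ : IsCrossedMul P.act P.cocycle μ) :
    ∀ (a b : A) (h l : H) (ι κ : Type) (s : Finset ι) (t : Finset κ)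
      (h1 h2 : ι → H) (l1 l2 : κ → H),
      Coalgebra.comul (R := k) h = ∑ i ∈ s, h1 i ⊗ₜ[k] h2 i →
      Coalgebra.comul (R := k) l = ∑ j ∈ t, l1 j ⊗ₜ[k] l2 j →
      μ (sharp P.act a h) (sharp P.act b l) =
        ∑ i ∈ s, ∑ j ∈ t,
          sharp P.act (a * P.act (h1 i) (b * P.act (l1 j) 1))
            (h2 i * l2 j) := by
  intro a b h l ι κ s t h1 h2 l1 l2 hh hl
  have hex : ∀ x : H, ∃ sf : Finset (H × H),
      Coalgebra.comul (R := k) x = ∑ w ∈ sf, w.1 ⊗ₜ[k] w.2 := fun x => by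
    obtain ⟨sf, hsf⟩ := TensorProduct.exists_finset (Coalgebra.comul (R := k) x)
    exact ⟨sf, hsf⟩
  choose rep hrep using hex
  rw [sharp_eq' P.act a h s h1 h2 hh, sharp_eq' P.act b l t l1 l2 hl]
  simp only [map_sum, LinearMap.sum_apply]
  calc
    ∑ j ∈ t, ∑ i ∈ s,
        μ ((a * P.act (h1 i) 1) ⊗ₜ[k] h2 i) ((b * P.act (l1 j) 1) ⊗ₜ[k] l2 j)
      = ∑ j ∈ t, ∑ i ∈ s, sharp P.act
          (a * P.act (h1 i) (b * P.act (l1 j) 1)) (h2 i * l2 j) :=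
        Finset.sum_congr rfl fun j _ =>
          smash_key P htriv1 htriv2 μ hμ rep hrep a (b * P.act (l1 j) 1)
            (l2 j) h s h1 h2 hh
    _ = ∑ i ∈ s, ∑ j ∈ t, sharp P.act
          (a * P.act (h1 i) (b * P.act (l1 j) 1)) (h2 i * l2 j) :=
        Finset.sum_comm
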